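/- Let biG = (𝒩, ℰ, ℰ′) be a bilevel graph on 𝒩 = {1,…,N} with N ≥ 2, let A_1, …, A_N be maximal monotone operators on a real Hilbert space H with zer(A_1 + ⋯ + A_N) ≠ ∅, and assume there exists j ∈ {1,…,N} such that A_j is uniformly monotone on every bounded subset of its domain. Let σ > 0, θ_k ∈ [ε, 2 − ε] for some 0 < ε < 1, and let (x^k), (a^k), (w^k) be generated by the graph-based Douglas–Rachford iteration. Then for every i ∈ {1,…,N} the sequence (x_i^k) converges strongly (in norm) to a point x* with 0 ∈ (A_1 + ⋯ + A_N)x*. -/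

import Mathlib

open scoped InnerProductSpace Topology
open Filter

noncomputable section

/-- The simple (undirected) graph induced by a set of directed edges on `Fin N`. -/
def graphOf {N : ℕ} (E : Finset (Fin N × Fin N)) : SimpleGraph (Fin N) where
  Adj i j := i ≠ j ∧ ((i, j) ∈ E ∨ (j, i) ∈ E)
  symm := ⟨fun i j h => ⟨h.1.symm, h.2.symm⟩⟩
  loopless := ⟨fun i h => h.1 rfl⟩

/-- Degree of node `i` in the undirected graph induced by `E`: number of adjacent nodes. -/
def degE {N : ℕ} (E : Finset (Fin N × Fin N)) (i : Fin N) : ℕ :=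
  (Finset.univ.filter (fun j => j ≠ i ∧ ((i, j) ∈ E ∨ (j, i) ∈ E))).card

/-- The graph Laplacian of the graph induced by `E`. -/
def lapE {N : ℕ} (E : Finset (Fin N × Fin N)) : Matrix (Fin N) (Fin N) ℝ :=
  fun i j =>
    if i = j then (degE E i : ℝ)
    else if (i, j) ∈ E ∨ (j, i) ∈ E then -1 else 0

/-- The skew-symmetric matrix `Σ` built from the Laplacian of the base graph. -/
def sigmaE {N : ℕ} (E' : Finset (Fin N × Fin N)) : Matrix (Fin N) (Fin N) ℝ :=
  fun i j => if i < j then -(lapE E' i j) else if j < i then lapE E' i j else 0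

/-- The matrix `P^{ij}`. -/
def pijM (N : ℕ) (i j : Fin N) : Matrix (Fin N) (Fin N) ℝ :=
  fun h k =>
    if h = i ∧ k = i then 1
    else if h = j ∧ k = j then 1
    else if h = j ∧ k = i then -2 else 0

/-- The matrix `P = ∑_{(i,j) ∈ ℰ∖ℰ′} P^{ij}`. -/
def pE {N : ℕ} (E E' : Finset (Fin N × Fin N)) : Matrix (Fin N) (Fin N) ℝ :=
  ∑ e ∈ E \ E', pijM N e.1 e.2

/-- The block operator `Q ⊗ I : H^M → H^N` induced by a matrix `Q ∈ ℝ^{N×M}`. -/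
def matVecH {H : Type*} [NormedAddCommGroup H] [InnerProductSpace ℝ H] {N M : ℕ}
    (Q : Matrix (Fin N) (Fin M) ℝ) (x : Fin M → H) : Fin N → H :=
  fun h => ∑ k, Q h k • x k

/-- `(E, E')` forms a bilevel graph: the state graph `(𝒩, E)` is connected with a topological
ordering, and the base graph `(𝒩, E')` is a connected subgraph. -/
structure IsBilevel {N : ℕ} (E E' : Finset (Fin N × Fin N)) : Prop where
  base_subset : E' ⊆ E
  topo : ∀ e ∈ E, e.1 < e.2
  state_conn : (graphOf E).Connected
  base_conn : (graphOf E').Connected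

/-- `Z` gives an onto decomposition of the Laplacian of the base graph `E'`:
`L = Z Zᵀ` and `ker Zᵀ = span{(1,…,1)}`. -/
def ZOnto {N : ℕ} (E' : Finset (Fin N × Fin N)) (Z : Matrix (Fin N) (Fin (N - 1)) ℝ) : Prop :=
  Z * Z.transpose = lapE E' ∧
  ∀ v : Fin N → ℝ, Z.transpose.mulVec v = 0 ↔ ∃ c : ℝ, v = fun _ => c

/-- The graph-based Douglas–Rachford iteration: `a_i^{k+1} ∈ A_i x_i^{k+1}`,
`(L⊗I)x^{k+1} + ((Σ+P)⊗I)x^{k+1} + σ a^{k+1} = (Z⊗I)w^k` and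
`w^{k+1} = w^k − θ_k (Zᵀ⊗I)x^{k+1}`. -/
structure IsGDR {H : Type*} [NormedAddCommGroup H] [InnerProductSpace ℝ H] {N : ℕ}
    (E E' : Finset (Fin N × Fin N)) (Z : Matrix (Fin N) (Fin (N - 1)) ℝ)
    (A : Fin N → H → Set H) (σ : ℝ) (θ : ℕ → ℝ)
    (x : ℕ → Fin N → H) (a : ℕ → Fin N → H) (w : ℕ → Fin (N - 1) → H) : Prop where
  mem : ∀ k i, a (k + 1) i ∈ A i (x (k + 1) i)
  res : ∀ k, matVecH (lapE E' + sigmaE E' + pE E E') (x (k + 1)) + σ • a (k + 1)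
          = matVecH Z (w k)
  upd : ∀ k, w (k + 1) = w k - θ k • matVecH Z.transpose (x (k + 1))

/-- A set-valued operator on a real inner product space is monotone. -/
def IsMonotoneOp {K : Type*} [NormedAddCommGroup K] [InnerProductSpace ℝ K]
    (A : K → Set K) : Prop :=
  ∀ x y u v : K, u ∈ A x → v ∈ A y → 0 ≤ ⟪u - v, x - y⟫_ℝ

/-- A set-valued operator is maximal monotone. -/
def IsMaxMonotone {K : Type*} [NormedAddCommGroup K] [InnerProductSpace ℝ K]
    (A : K → Set K) : Prop :=
  IsMonotoneOp A ∧ ∀ x u : K, (∀ y v : K, v ∈ A y → 0 ≤ ⟪u - v, x - y⟫_ℝ) → u ∈ A x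

/-- `zer (A_1 + ⋯ + A_N) ≠ ∅`. -/
def SumZerNonempty {H : Type*} [NormedAddCommGroup H] [InnerProductSpace ℝ H] {N : ℕ}
    (A : Fin N → H → Set H) : Prop :=
  ∃ (xs : H) (b : Fin N → H), (∀ i, b i ∈ A i xs) ∧ ∑ i, b i = 0

/-- Weak convergence of a sequence in an inner product space. -/
def WeakLim {K : Type*} [NormedAddCommGroup K] [InnerProductSpace ℝ K]
    (u : ℕ → K) (l : K) : Prop :=
  ∀ h : K, Tendsto (fun k => ⟪u k, h⟫_ℝ) atTop (𝓝 ⟪l, h⟫_ℝ)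

/-- The state variance `Var(x) = (1/N) ∑_i ‖x_i − x̄‖²`. -/
def stateVar {H : Type*} [NormedAddCommGroup H] [InnerProductSpace ℝ H] {N : ℕ}
    (x : Fin N → H) : ℝ :=
  (N : ℝ)⁻¹ * ∑ i, ‖x i - (N : ℝ)⁻¹ • ∑ j, x j‖ ^ 2

/-- In-degree `d_i⁺ = #{h : (h,i) ∈ E}` of node `i`. -/
def inDeg {N : ℕ} (E : Finset (Fin N × Fin N)) (i : Fin N) : ℕ :=
  (Finset.univ.filter (fun h => (h, i) ∈ E)).card

/-- Out-degree `d_i⁻ = #{h : (i,h) ∈ E}` of node `i`. -/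
def outDeg {N : ℕ} (E : Finset (Fin N × Fin N)) (i : Fin N) : ℕ :=
  (Finset.univ.filter (fun h => (i, h) ∈ E)).card

/-- The unbalance `U_G = sqrt((1/N) ∑_i (d_i⁻ − d_i⁺)²)` of the state graph. -/
def unbalance {N : ℕ} (E : Finset (Fin N × Fin N)) : ℝ :=
  Real.sqrt ((N : ℝ)⁻¹ * ∑ i, ((outDeg E i : ℝ) - (inDeg E i : ℝ)) ^ 2)

end

noncomputable section

/-- `A` is uniformly monotone on `S`: there is an increasing function
`φ : [0,∞) → [0,+∞]` vanishing only at `0` with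
`⟨a − a′, x − x′⟩ ≥ φ(‖x − x′‖)` for all `x, x′ ∈ S`, `a ∈ A x`, `a′ ∈ A x′`. -/
def UnifMonoOn {H : Type*} [NormedAddCommGroup H] [InnerProductSpace ℝ H]
    (A : H → Set H) (S : Set H) : Prop :=
  ∃ φ : ℝ → EReal,
    (∀ s t : ℝ, 0 ≤ s → s ≤ t → φ s ≤ φ t) ∧
    (∀ t : ℝ, 0 ≤ t → 0 ≤ φ t) ∧
    (∀ t : ℝ, 0 ≤ t → (φ t = 0 ↔ t = 0)) ∧
    (∀ x x' u u' : H, x ∈ S → x' ∈ S → u ∈ A x → u' ∈ A x' →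
      φ ‖x - x'‖ ≤ ((⟪u - u', x - x'⟫_ℝ : ℝ) : EReal))

end


section AuxLemmas

variable {H : Type*} [NormedAddCommGroup H] [InnerProductSpace ℝ H]

lemma matVecH_add {N M : ℕ} (Q R : Matrix (Fin N) (Fin M) ℝ) (u : Fin M → H) :
    matVecH (Q + R) u = matVecH Q u + matVecH R u := by
  funext i
  simp [matVecH, add_smul, Finset.sum_add_distrib]

lemma matVecH_sub_mat {N M : ℕ} (Q R : Matrix (Fin N) (Fin M) ℝ) (u : Fin M → H) :
    matVecH (Q - R) u = matVecH Q u - matVecH R u := by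
  funext i
  simp [matVecH, sub_smul, Finset.sum_sub_distrib]

lemma matVecH_sub_vec {N M : ℕ} (Q : Matrix (Fin N) (Fin M) ℝ) (u v : Fin M → H) :
    matVecH Q (u - v) = matVecH Q u - matVecH Q v := by
  funext i
  simp [matVecH, smul_sub, Finset.sum_sub_distrib]

lemma matVecH_mul {N M K : ℕ} (Q : Matrix (Fin N) (Fin M) ℝ) (R : Matrix (Fin M) (Fin K) ℝ)
    (u : Fin K → H) : matVecH (Q * R) u = matVecH Q (matVecH R u) := by
  funext i
  simp only [matVecH, Matrix.mul_apply, Finset.sum_smul, Finset.smul_sum, smul_smul]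
  rw [Finset.sum_comm]

lemma matVecH_one {N : ℕ} (u : Fin N → H) : matVecH (1 : Matrix (Fin N) (Fin N) ℝ) u = u := by
  funext i
  simp [matVecH, Matrix.one_apply, ite_smul]

lemma matVecH_const {N M : ℕ} (Q : Matrix (Fin N) (Fin M) ℝ) (c : H) (i : Fin N) :
    matVecH Q (fun _ => c) i = (∑ h, Q i h) • c := by
  simp [matVecH, Finset.sum_smul]

lemma ip_entries {N M : ℕ} (Q : Matrix (Fin N) (Fin M) ℝ) (u : Fin N → H) (v : Fin M → H) :
    ∑ i, ⟪u i, matVecH Q v i⟫_ℝ = ∑ i, ∑ k, Q i k * ⟪u i, v k⟫_ℝ := by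
  simp [matVecH, inner_sum, real_inner_smul_right]

lemma ip_adjoint {N M : ℕ} (Q : Matrix (Fin N) (Fin M) ℝ) (u : Fin M → H) (v : Fin N → H) :
    ∑ i, ⟪matVecH Q u i, v i⟫_ℝ = ∑ m, ⟪u m, matVecH Q.transpose v m⟫_ℝ := by
  simp only [matVecH, sum_inner, inner_sum, real_inner_smul_left, real_inner_smul_right,
    Matrix.transpose_apply]
  rw [Finset.sum_comm]

lemma sum_skew_weights {N : ℕ} (A : Matrix (Fin N) (Fin N) ℝ) (hA : ∀ i h, A h i = - A i h)
    (c : Fin N → Fin N → ℝ) (hc : ∀ i h, c h i = c i h) :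
    ∑ i, ∑ h, A i h * c i h = 0 := by
  have key : (∑ i, ∑ h, A i h * c i h) = - ∑ i, ∑ h, A i h * c i h := by
    calc (∑ i, ∑ h, A i h * c i h) = ∑ h, ∑ i, A i h * c i h := Finset.sum_comm
    _ = ∑ h, ∑ i, -(A h i * c h i) := by
        refine Finset.sum_congr rfl fun h _ => Finset.sum_congr rfl fun i _ => ?_
        rw [hA h i, hc h i]; ring
    _ = - ∑ h, ∑ i, A h i * c h i := by simp
    _ = - ∑ i, ∑ h, A i h * c i h := rfl
  linarith

lemma lapE_symm {N : ℕ} (E : Finset (Fin N × Fin N)) (i j : Fin N) : lapE E i j = lapE E j i := by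
  unfold lapE
  rcases eq_or_ne i j with rfl | hne
  · rfl
  · rw [if_neg hne, if_neg hne.symm]
    exact if_congr or_comm rfl rfl

lemma sigmaE_skew {N : ℕ} (E' : Finset (Fin N × Fin N)) (i h : Fin N) :
    sigmaE E' h i = - sigmaE E' i h := by
  unfold sigmaE
  rcases lt_trichotomy i h with hlt | rfl | hgt
  · simp [hlt, not_lt.mpr hlt.le, lapE_symm E' h i]
  · simp
  · simp [hgt, not_lt.mpr hgt.le, lapE_symm E' h i]

lemma pijM_eq {N : ℕ} (a b : Fin N) (hab : a ≠ b) :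
    pijM N a b = fun i k => (if i = a ∧ k = a then (1:ℝ) else 0)
      + (if i = b ∧ k = b then 1 else 0) + (if i = b ∧ k = a then (-2) else 0) := by
  funext i k
  unfold pijM
  by_cases h1 : i = a <;> by_cases h2 : i = b <;> by_cases h3 : k = a <;> by_cases h4 : k = b <;>
    simp_all <;> norm_num

lemma sum_pij_weights {N : ℕ} (a b : Fin N) (hab : a ≠ b) (c : Fin N → Fin N → ℝ) :
    ∑ i, ∑ k, pijM N a b i k * c i k = c a a + c b b - 2 * c b a := by
  rw [pijM_eq a b hab]
  simp [add_mul, ite_mul, Finset.sum_add_distrib, ite_and]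
  ring

lemma lap_rowsum {N : ℕ} {E' : Finset (Fin N × Fin N)} {Z : Matrix (Fin N) (Fin (N-1)) ℝ}
    (hZ : ZOnto E' Z) (i : Fin N) : ∑ j, lapE E' i j = 0 := by
  have h1 : Z.transpose.mulVec (fun _ => (1:ℝ)) = 0 := (hZ.2 _).mpr ⟨1, rfl⟩
  have hcol : ∀ m, ∑ jj, Z jj m = 0 := by
    intro m
    have := congrFun h1 m
    simpa [Matrix.mulVec, dotProduct] using this
  have h2 : ∑ j, lapE E' i j = ∑ j, ∑ m, Z i m * Z j m := by
    rw [← hZ.1]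
    simp [Matrix.mul_apply]
  rw [h2, Finset.sum_comm]
  refine Finset.sum_eq_zero fun m _ => ?_
  rw [← Finset.mul_sum, hcol m, mul_zero]

lemma exists_lap_solve {N : ℕ} (hN : 2 ≤ N) (E' : Finset (Fin N × Fin N))
    (Z : Matrix (Fin N) (Fin (N-1)) ℝ) (hZ : ZOnto E' Z)
    (v : Fin N → H) (hv : ∑ i, v i = 0) :
    ∃ y : Fin N → H, matVecH (lapE E') y = v := by
  classical
  set L : Matrix (Fin N) (Fin N) ℝ := lapE E' with hLdef
  set J : Matrix (Fin N) (Fin N) ℝ := Matrix.of (fun _ _ => (N:ℝ)⁻¹) with hJdef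
  set K : Matrix (Fin N) (Fin N) ℝ := L + J with hKdef
  have hN0 : 0 < (N:ℝ) := by positivity
  have hNne : (N:ℝ) ≠ 0 := ne_of_gt hN0
  have hrow : ∀ i, ∑ jj, L i jj = 0 := fun i => lap_rowsum hZ i
  have hKrow : ∀ i, ∑ jj, K i jj = 1 := by
    intro i
    simp only [hKdef, Matrix.add_apply, Finset.sum_add_distrib, hrow i]
    simp [hJdef, Finset.sum_const, hNne]
  have hinj : ∀ u : Fin N → ℝ, K.mulVec u = 0 → u = 0 := by
    intro u hu
    have hquad : dotProduct u (K.mulVec u) = 0 := by rw [hu]; simp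
    have hLpart : dotProduct u (L.mulVec u)
        = dotProduct (Z.transpose.mulVec u) (Z.transpose.mulVec u) := by
      rw [hLdef, ← hZ.1, ← Matrix.mulVec_mulVec, Matrix.dotProduct_mulVec,
        ← Matrix.mulVec_transpose]
    have hJpart : dotProduct u (J.mulVec u) = (N:ℝ)⁻¹ * (∑ i, u i)^2 := by
      simp only [hJdef, Matrix.mulVec, dotProduct, Matrix.of_apply, ← Finset.mul_sum]
      rw [← Finset.sum_mul]
      ring
    have hsplit : dotProduct u (K.mulVec u)
        = dotProduct u (L.mulVec u) + dotProduct u (J.mulVec u) := by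
      rw [hKdef, Matrix.add_mulVec]
      simp [dotProduct_add]
    have ht2 : dotProduct (Z.transpose.mulVec u) (Z.transpose.mulVec u)
        = ∑ m, (Z.transpose.mulVec u m)^2 := by
      simp [dotProduct, sq]
    have h1 : 0 ≤ ∑ m, (Z.transpose.mulVec u m)^2 :=
      Finset.sum_nonneg fun m _ => sq_nonneg _
    have h2 : 0 ≤ (N:ℝ)⁻¹ * (∑ i, u i)^2 := by positivity
    have hzero1 : ∑ m, (Z.transpose.mulVec u m)^2 = 0 := by
      rw [hLpart, hJpart, ht2] at hsplit
      linarith [hquad, hsplit]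
    have hzero2 : (N:ℝ)⁻¹ * (∑ i, u i)^2 = 0 := by
      rw [hLpart, hJpart, ht2] at hsplit
      linarith [hquad, hsplit]
    have htz : Z.transpose.mulVec u = 0 := by
      funext m
      have := (Finset.sum_eq_zero_iff_of_nonneg (fun m _ => sq_nonneg
        (Z.transpose.mulVec u m))).mp hzero1 m (Finset.mem_univ m)
      exact pow_eq_zero_iff (two_ne_zero) |>.mp this
    obtain ⟨c, hc⟩ := (hZ.2 u).mp htz
    have hsc : ∑ i, u i = (N:ℝ) * c := by
      rw [hc]
      simp [Finset.sum_const, mul_comm]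
    have hc0 : c = 0 := by
      rw [hsc] at hzero2
      have : ((N:ℝ) * c)^2 = 0 := by
        field_simp at hzero2
        simpa [sq] using hzero2
      have := pow_eq_zero_iff (two_ne_zero) |>.mp this
      rcases mul_eq_zero.mp this with h | h
      · exact absurd h hNne
      · exact h
    rw [hc, hc0]
    rfl
  have hdet : K.det ≠ 0 := by
    intro h0
    obtain ⟨u, hu0, huK⟩ := (Matrix.exists_mulVec_eq_zero_iff).mpr h0
    exact hu0 (hinj u huK)
  have hdetU : IsUnit K.det := isUnit_iff_ne_zero.mpr hdet
  have hKsymm : K.transpose = K := by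
    rw [hKdef, Matrix.transpose_add]
    congr 1
    · rw [hLdef, ← hZ.1, Matrix.transpose_mul, Matrix.transpose_transpose]
  have hK1 : K.mulVec (fun _ => (1:ℝ)) = fun _ => 1 := by
    funext i
    simp only [Matrix.mulVec, dotProduct, mul_one]
    exact hKrow i
  have hKinv1 : K⁻¹.mulVec (fun _ => (1:ℝ)) = fun _ => 1 := by
    have h2 : K⁻¹.mulVec (K.mulVec (fun _ => (1:ℝ))) = K⁻¹.mulVec (fun _ => 1) := by
      rw [hK1]
    rw [Matrix.mulVec_mulVec, Matrix.nonsing_inv_mul K hdetU, Matrix.one_mulVec] at h2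
    exact h2.symm
  have hcolinv : ∀ hh : Fin N, ∑ m, K⁻¹ m hh = 1 := by
    intro hh
    have hsymminv : K⁻¹.transpose = K⁻¹ := by
      rw [Matrix.transpose_nonsing_inv, hKsymm]
    calc ∑ m, K⁻¹ m hh = (K⁻¹.transpose.mulVec (fun _ => 1)) hh := by
          simp [Matrix.mulVec, dotProduct, Matrix.transpose_apply]
    _ = (K⁻¹.mulVec (fun _ => 1)) hh := by rw [hsymminv]
    _ = 1 := congrFun hKinv1 hh
  refine ⟨matVecH K⁻¹ v, ?_⟩
  have hLK : L = K - J := by rw [hKdef, add_sub_cancel_right]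
  have hJKzero : matVecH (J * K⁻¹) v = 0 := by
    funext i
    have hJK : ∀ hh, (J * K⁻¹) i hh = (N:ℝ)⁻¹ := by
      intro hh
      rw [Matrix.mul_apply]
      simp only [hJdef, Matrix.of_apply]
      rw [← Finset.mul_sum, hcolinv hh, mul_one]
    have hstep : matVecH (J * K⁻¹) v i = ∑ hh, (N:ℝ)⁻¹ • v hh :=
      Finset.sum_congr rfl fun hh _ => by rw [hJK hh]
    rw [hstep, ← Finset.smul_sum, hv, smul_zero]
    rfl
  calc matVecH L (matVecH K⁻¹ v) = matVecH (L * K⁻¹) v := (matVecH_mul _ _ _).symm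
  _ = matVecH (K * K⁻¹) v - matVecH (J * K⁻¹) v := by
      rw [hLK, Matrix.sub_mul, matVecH_sub_mat]
  _ = v := by
      rw [Matrix.mul_nonsing_inv K hdetU, matVecH_one, hJKzero, sub_zero]

lemma degE_pos {N : ℕ} (hN : 2 ≤ N) {E' : Finset (Fin N × Fin N)}
    (hconn : (graphOf E').Connected) (i : Fin N) : 1 ≤ degE E' i := by
  have : Nontrivial (Fin N) := Fin.nontrivial_iff_two_le.mpr hN
  obtain ⟨u, hu⟩ := exists_ne i
  obtain ⟨p⟩ := hconn.preconnected i u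
  obtain ⟨v, hadj⟩ : ∃ v, (graphOf E').Adj i v := by
    cases p with
    | nil => exact absurd rfl hu.symm
    | cons hadj q => exact ⟨_, hadj⟩
  unfold degE
  refine Finset.card_pos.mpr ⟨v, Finset.mem_filter.mpr ⟨Finset.mem_univ _, ?_, (show i ≠ v ∧ ((i, v) ∈ E' ∨ (v, i) ∈ E') from hadj).2⟩⟩
  exact Ne.symm (show i ≠ v ∧ ((i, v) ∈ E' ∨ (v, i) ∈ E') from hadj).1

lemma M_upper {N : ℕ} {E E' : Finset (Fin N × Fin N)} (hbi : IsBilevel E E')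
    {i h : Fin N} (hih : i < h) : (lapE E' + sigmaE E' + pE E E') i h = 0 := by
  have hne : i ≠ h := ne_of_lt hih
  have hls : lapE E' i h + sigmaE E' i h = 0 := by
    unfold sigmaE; rw [if_pos hih]; ring
  have hp : pE E E' i h = 0 := by
    unfold pE
    rw [Matrix.sum_apply]
    refine Finset.sum_eq_zero fun e he => ?_
    have hlt : e.1 < e.2 := hbi.topo e (Finset.mem_sdiff.mp he).1
    rw [pijM_eq e.1 e.2 (ne_of_lt hlt)]
    have c1 : ¬(i = e.1 ∧ h = e.1) := by rintro ⟨rfl, rfl⟩; exact hne rfl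
    have c2 : ¬(i = e.2 ∧ h = e.2) := by rintro ⟨rfl, rfl⟩; exact hne rfl
    have c3 : ¬(i = e.2 ∧ h = e.1) := by rintro ⟨rfl, rfl⟩; exact absurd hlt (lt_asymm hih)
    simp [c1, c2, c3]
  simp only [Matrix.add_apply, hp, add_zero]
  linarith [hls]

lemma M_diag {N : ℕ} (hN : 2 ≤ N) {E E' : Finset (Fin N × Fin N)} (hbi : IsBilevel E E')
    (i : Fin N) : 1 ≤ (lapE E' + sigmaE E' + pE E E') i i := by
  have h1 : lapE E' i i = (degE E' i : ℝ) := by unfold lapE; simp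
  have h2 : sigmaE E' i i = 0 := by unfold sigmaE; simp
  have h3 : 0 ≤ pE E E' i i := by
    unfold pE
    rw [Matrix.sum_apply]
    refine Finset.sum_nonneg fun e he => ?_
    have hlt : e.1 < e.2 := hbi.topo e (Finset.mem_sdiff.mp he).1
    rw [pijM_eq e.1 e.2 (ne_of_lt hlt)]
    have c3 : ¬(i = e.2 ∧ i = e.1) := by rintro ⟨rfl, h'⟩; exact absurd hlt (by rw [h']; exact lt_irrefl _)
    by_cases ca : i = e.1 <;> by_cases cb : i = e.2 <;> simp_all <;> norm_num
  have h4 : (1:ℝ) ≤ (degE E' i : ℝ) := by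
    exact_mod_cast degE_pos hN hbi.base_conn i
  have h5 : (lapE E' + sigmaE E' + pE E E') i i
      = (degE E' i : ℝ) + 0 + pE E E' i i := by
    rw [Matrix.add_apply, Matrix.add_apply, h1, h2]
  rw [h5]
  linarith

lemma inner_comb_nonneg (p q : H) : 0 ≤ ⟪p,p⟫_ℝ + ⟪q,q⟫_ℝ - 2*⟪q,p⟫_ℝ := by
  have h2 : ⟪p - q, p - q⟫_ℝ = ⟪p,p⟫_ℝ - ⟪p,q⟫_ℝ - ⟪q,p⟫_ℝ + ⟪q,q⟫_ℝ := by
    simp only [inner_sub_left, inner_sub_right]; ring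
  have h3 : ⟪p,q⟫_ℝ = ⟪q,p⟫_ℝ := real_inner_comm q p
  have h4 : (0:ℝ) ≤ ⟪p - q, p - q⟫_ℝ := real_inner_self_nonneg
  linarith

end AuxLemmas

set_option maxHeartbeats 4000000 in
/-- **Proposition 3.13.** If some `A_j` is uniformly monotone on every bounded
subset of its domain, then all sequences `x_i^k` of the graph-based Douglas–Rachford iteration
converge strongly to a solution of `0 ∈ (A_1 + ⋯ + A_N)x`. -/
theorem graphDRS_strong_convergence
    {H : Type*} [NormedAddCommGroup H] [InnerProductSpace ℝ H] [CompleteSpace H]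
    (N : ℕ) (hN : 2 ≤ N) (E E' : Finset (Fin N × Fin N)) (hbi : IsBilevel E E')
    (Z : Matrix (Fin N) (Fin (N - 1)) ℝ) (hZ : ZOnto E' Z)
    (A : Fin N → H → Set H) (hA : ∀ i, IsMaxMonotone (A i))
    (hzer : SumZerNonempty A)
    (j : Fin N)
    (hunif : ∀ S : Set H, S ⊆ {z : H | (A j z).Nonempty} → Bornology.IsBounded S →
      UnifMonoOn (A j) S)
    (σ : ℝ) (hσ : 0 < σ)
    (ε : ℝ) (hε0 : 0 < ε) (hε1 : ε < 1)
    (θ : ℕ → ℝ) (hθ : ∀ k, θ k ∈ Set.Icc ε (2 - ε))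
    (x a : ℕ → Fin N → H) (w : ℕ → Fin (N - 1) → H)
    (hiter : IsGDR E E' Z A σ θ x a w) :
    ∃ xsol : H,
      (∃ b : Fin N → H, (∀ i, b i ∈ A i xsol) ∧ ∑ i, b i = 0) ∧
      ∀ i, Tendsto (fun k => x k i) atTop (𝓝 xsol) := by
    classical
  obtain ⟨xb, b, hb, hbsum⟩ := hzer
  have hmono : ∀ (i : Fin N) (x1 u1 x2 u2 : H), u1 ∈ A i x1 → u2 ∈ A i x2 →
      0 ≤ ⟪u1 - u2, x1 - x2⟫_ℝ := fun i x1 u1 x2 u2 h1 h2 => (hA i).1 x1 x2 u1 u2 h1 h2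
  -- column sums of Z vanish
  have hZcol : ∀ m, ∑ hh, Z hh m = 0 := by
    intro m
    have h1 : Z.transpose.mulVec (fun _ => (1:ℝ)) = 0 := (hZ.2 _).mpr ⟨1, rfl⟩
    have := congrFun h1 m
    simpa [Matrix.mulVec, dotProduct] using this
  have hZtconst : ∀ c : H, matVecH Z.transpose (fun _ => c) = 0 := by
    intro c
    funext m
    rw [matVecH_const]
    have : (∑ hh, Z.transpose m hh) = 0 := by
      simpa [Matrix.transpose_apply] using hZcol m
    rw [this, zero_smul]
    simp
  have hLconst : matVecH (lapE E') (fun _ => xb) = 0 := by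
    funext i
    rw [matVecH_const, lap_rowsum hZ i, zero_smul]
    simp
  -- the fixed point wbar
  set vbar : Fin N → H := matVecH (sigmaE E' + pE E E') (fun _ => xb) + σ • b with hvbar
  have hvbarsum : ∑ i, vbar i = 0 := by
    rw [hvbar]
    simp only [Pi.add_apply, Pi.smul_apply, Finset.sum_add_distrib]
    have hpart1 : ∑ i, matVecH (sigmaE E' + pE E E') (fun _ => xb) i = 0 := by
      have hcst : ∀ i, matVecH (sigmaE E' + pE E E') (fun _ => xb) i
          = (∑ hh, (sigmaE E' + pE E E') i hh) • xb := fun i => matVecH_const _ _ _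
      rw [Finset.sum_congr rfl fun i _ => hcst i, ← Finset.sum_smul]
      have h1 : (∑ i, ∑ hh, sigmaE E' i hh) = 0 := by
        have := sum_skew_weights (sigmaE E') (sigmaE_skew E') (fun _ _ => 1) (fun _ _ => rfl)
        simpa using this
      have step1 : ∀ i : Fin N, (∑ hh, ∑ e ∈ E \ E', pijM N e.1 e.2 i hh)
          = ∑ e ∈ E \ E', ∑ hh, pijM N e.1 e.2 i hh := fun i => Finset.sum_comm
      have h2 : (∑ i, ∑ hh, pE E E' i hh) = 0 := by
        calc (∑ i, ∑ hh, pE E E' i hh)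
            = ∑ i, ∑ e ∈ E \ E', ∑ hh, pijM N e.1 e.2 i hh := by
              unfold pE
              simp only [Matrix.sum_apply]
              exact Finset.sum_congr rfl fun i _ => step1 i
          _ = ∑ e ∈ E \ E', ∑ i, ∑ hh, pijM N e.1 e.2 i hh := Finset.sum_comm
          _ = 0 := by
              refine Finset.sum_eq_zero fun e he => ?_
              have hlt : e.1 < e.2 := hbi.topo e (Finset.mem_sdiff.mp he).1
              have hpw := sum_pij_weights e.1 e.2 (ne_of_lt hlt) (fun _ _ => (1:ℝ))
              simp only [mul_one] at hpw
              rw [hpw]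
              norm_num
      have htot : (∑ i, ∑ hh, (sigmaE E' + pE E E') i hh) = 0 := by
        simp only [Matrix.add_apply, Finset.sum_add_distrib]
        rw [h1, h2, add_zero]
      rw [htot, zero_smul]
    rw [hpart1, zero_add, ← Finset.smul_sum, hbsum, smul_zero]
  obtain ⟨y0, hy0⟩ := exists_lap_solve hN E' Z hZ vbar hvbarsum
  set wbar : Fin (N-1) → H := matVecH Z.transpose y0 with hwbar
  have hZwbar : matVecH Z wbar = vbar := by
    rw [hwbar, ← matVecH_mul, hZ.1]
    exact hy0
  have hMconst : matVecH (lapE E' + sigmaE E' + pE E E') (fun _ => xb)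
      = matVecH (sigmaE E' + pE E E') (fun _ => xb) := by
    rw [add_assoc, matVecH_add, hLconst, zero_add]
  -- the residual identity
  have hres : ∀ k, matVecH Z (w k) - matVecH Z wbar
      = matVecH (lapE E' + sigmaE E' + pE E E') (x (k+1) - (fun _ => xb))
        + σ • (a (k+1) - b) := by
    intro k
    rw [hZwbar, ← hiter.res k, hvbar, matVecH_sub_vec, hMconst, smul_sub]
    abel
  set q : ℕ → Fin (N-1) → H := fun k => matVecH Z.transpose (x (k+1)) with hq
  set D : ℕ → ℝ := fun k => ∑ i, ⟪x (k+1) i - xb, a (k+1) i - b i⟫_ℝ with hD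
  set s : ℕ → ℝ := fun k => ∑ m, ‖w k m - wbar m‖^2 with hs
  set Qn : ℕ → ℝ := fun k => ∑ m, ‖q k m‖^2 with hQn
  have hDnonneg : ∀ k, 0 ≤ D k := by
    intro k
    refine Finset.sum_nonneg fun i _ => ?_
    rw [real_inner_comm]
    exact hmono i _ _ _ _ (hiter.mem k i) (hb i)
  have hQnonneg : ∀ k, 0 ≤ Qn k := fun k => Finset.sum_nonneg fun m _ => sq_nonneg _
  have hsnonneg : ∀ k, 0 ≤ s k := fun k => Finset.sum_nonneg fun m _ => sq_nonneg _
  -- key inequality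
  have hkey : ∀ k, Qn k + σ * D k ≤ ∑ m, ⟪q k m, (w k - wbar) m⟫_ℝ := by
    intro k
    set d : Fin N → H := x (k+1) - (fun _ => xb) with hd
    have hqd : q k = matVecH Z.transpose d := by
      simp only [hq, hd, matVecH_sub_vec, hZtconst, sub_zero]
    have hZw : matVecH Z (w k - wbar)
        = matVecH (lapE E' + sigmaE E' + pE E E') d + σ • (a (k+1) - b) := by
      rw [matVecH_sub_vec]
      exact hres k
    have step1 : ∑ m, ⟪q k m, (w k - wbar) m⟫_ℝ
        = ∑ i, ⟪d i, matVecH Z (w k - wbar) i⟫_ℝ := by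
      rw [hqd]
      have h0 := ip_adjoint Z.transpose d (w k - wbar)
      rw [Matrix.transpose_transpose] at h0
      exact h0
    have step2 : ∑ i, ⟪d i, matVecH Z (w k - wbar) i⟫_ℝ
        = (∑ i, ⟪d i, matVecH (lapE E' + sigmaE E' + pE E E') d i⟫_ℝ) + σ * D k := by
      rw [hZw]
      simp only [Pi.add_apply, Pi.smul_apply, Pi.sub_apply, inner_add_right,
        real_inner_smul_right, Finset.sum_add_distrib]
      congr 1
      rw [Finset.mul_sum]
      exact Finset.sum_congr rfl fun i _ => by rw [hd]; rfl
    have hsplit : matVecH (lapE E' + sigmaE E' + pE E E') d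
        = matVecH (lapE E') d + matVecH (sigmaE E') d + matVecH (pE E E') d := by
      rw [matVecH_add, matVecH_add]
    have termL : ∑ i, ⟪d i, matVecH (lapE E') d i⟫_ℝ = Qn k := by
      have h1 : matVecH (lapE E') d = matVecH Z (matVecH Z.transpose d) := by
        rw [← matVecH_mul, hZ.1]
      rw [h1]
      have h2 : ∑ i, ⟪d i, matVecH Z (matVecH Z.transpose d) i⟫_ℝ
          = ∑ i, ⟪matVecH Z (matVecH Z.transpose d) i, d i⟫_ℝ :=
        Finset.sum_congr rfl fun i _ => real_inner_comm _ _
      rw [h2, ip_adjoint]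
      simp only [hQn, hqd]
      exact Finset.sum_congr rfl fun m _ => real_inner_self_eq_norm_sq _
    have termS : ∑ i, ⟪d i, matVecH (sigmaE E') d i⟫_ℝ = 0 := by
      rw [ip_entries]
      exact sum_skew_weights _ (sigmaE_skew E') _ (fun i h => real_inner_comm _ _)
    have termP : 0 ≤ ∑ i, ⟪d i, matVecH (pE E E') d i⟫_ℝ := by
      rw [ip_entries]
      have hrw : ∀ i kk : Fin N, pE E E' i kk * ⟪d i, d kk⟫_ℝ
          = ∑ e ∈ E \ E', pijM N e.1 e.2 i kk * ⟪d i, d kk⟫_ℝ := by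
        intro i kk
        unfold pE
        rw [Matrix.sum_apply, Finset.sum_mul]
      calc (0:ℝ) ≤ ∑ e ∈ E \ E', (⟪d e.1, d e.1⟫_ℝ + ⟪d e.2, d e.2⟫_ℝ - 2*⟪d e.2, d e.1⟫_ℝ) :=
            Finset.sum_nonneg fun e _ => inner_comb_nonneg _ _
        _ = ∑ e ∈ E \ E', ∑ i, ∑ kk, pijM N e.1 e.2 i kk * ⟪d i, d kk⟫_ℝ := by
            refine Finset.sum_congr rfl fun e he => ?_
            have hlt : e.1 < e.2 := hbi.topo e (Finset.mem_sdiff.mp he).1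
            rw [sum_pij_weights e.1 e.2 (ne_of_lt hlt)]
        _ = ∑ i, ∑ e ∈ E \ E', ∑ kk, pijM N e.1 e.2 i kk * ⟪d i, d kk⟫_ℝ := Finset.sum_comm
        _ = ∑ i, ∑ kk, ∑ e ∈ E \ E', pijM N e.1 e.2 i kk * ⟪d i, d kk⟫_ℝ :=
            Finset.sum_congr rfl fun i _ => Finset.sum_comm
        _ = ∑ i, ∑ kk, pE E E' i kk * ⟪d i, d kk⟫_ℝ :=
            Finset.sum_congr rfl fun i _ => Finset.sum_congr rfl fun kk _ => (hrw i kk).symm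
    have hMxsum : ∑ i, ⟪d i, matVecH (lapE E' + sigmaE E' + pE E E') d i⟫_ℝ
        = Qn k + (∑ i, ⟪d i, matVecH (sigmaE E') d i⟫_ℝ)
          + ∑ i, ⟪d i, matVecH (pE E E') d i⟫_ℝ := by
      rw [hsplit]
      simp only [Pi.add_apply, inner_add_right, Finset.sum_add_distrib]
      rw [termL]
    rw [step1, step2, hMxsum, termS]
    linarith [termP]
  -- Fejer inequality
  have hfejer : ∀ k, s (k+1) + ε^2 * Qn k + 2*ε*σ*D k ≤ s k := by
    intro k
    obtain ⟨hθ1, hθ2⟩ := hθ k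
    have hpoint : ∀ m, ‖w (k+1) m - wbar m‖^2
        = ‖w k m - wbar m‖^2 - 2*θ k*⟪q k m, (w k - wbar) m⟫_ℝ + θ k^2*‖q k m‖^2 := by
      intro m
      have hsubst : w (k+1) m - wbar m = (w k m - wbar m) - θ k • q k m := by
        rw [hiter.upd k]
        simp only [Pi.sub_apply, Pi.smul_apply, hq]
        abel
      rw [hsubst, norm_sub_sq_real, real_inner_smul_right, norm_smul]
      have hcm : ⟪w k m - wbar m, q k m⟫_ℝ = ⟪q k m, (w k - wbar) m⟫_ℝ := by
        rw [real_inner_comm]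
        simp [Pi.sub_apply]
      rw [hcm]
      simp only [Real.norm_eq_abs, mul_pow, sq_abs]
      ring
    have hsum : s (k+1) = s k - 2*θ k*(∑ m, ⟪q k m, (w k - wbar) m⟫_ℝ) + θ k^2 * Qn k := by
      simp only [hs, hQn]
      rw [Finset.sum_congr rfl fun m _ => hpoint m]
      rw [Finset.sum_add_distrib, Finset.sum_sub_distrib, ← Finset.mul_sum, ← Finset.mul_sum]
    have hemid := hkey k
    have h2θ : 0 ≤ 2*θ k := by linarith
    have hmul := mul_le_mul_of_nonneg_left hemid h2θ
    have p1 : 0 ≤ (θ k - ε) * ((2 - ε) - θ k) := mul_nonneg (by linarith) (by linarith)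
    have hQcoef : ε^2*Qn k ≤ (2*θ k - θ k^2)*Qn k := by
      nlinarith [mul_nonneg p1 (hQnonneg k),
        mul_nonneg (mul_nonneg hε0.le (sub_nonneg.mpr hε1.le)) (hQnonneg k)]
    have hDcoef : 2*ε*σ*D k ≤ 2*θ k*σ*D k := by
      nlinarith [mul_nonneg (mul_nonneg (sub_nonneg.mpr hθ1) hσ.le) (hDnonneg k)]
    nlinarith [hsum, hmul, hQcoef, hDcoef]
  have hsdec : ∀ k, s (k+1) ≤ s k := by
    intro k
    have h1 := hfejer k
    have h2 : 0 ≤ ε^2 * Qn k := mul_nonneg (sq_nonneg ε) (hQnonneg k)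
    have h3 : 0 ≤ 2*ε*σ*D k := by
      have := hDnonneg k
      positivity
    linarith
  have hanti : Antitone s := antitone_nat_of_succ_le hsdec
  have hbdd : BddBelow (Set.range s) := ⟨0, by rintro y ⟨k, rfl⟩; exact hsnonneg k⟩
  have hslim : Tendsto s atTop (𝓝 (⨅ k, s k)) := tendsto_atTop_ciInf hanti hbdd
  have hslim' : Tendsto (fun k => s (k+1)) atTop (𝓝 (⨅ k, s k)) :=
    hslim.comp (tendsto_add_atTop_nat 1)
  have hdiff : Tendsto (fun k => s k - s (k+1)) atTop (𝓝 0) := by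
    have := hslim.sub hslim'
    simpa using this
  have hQn0 : Tendsto Qn atTop (𝓝 0) := by
    have hbnd : ∀ k, Qn k ≤ (s k - s (k+1)) / ε^2 := by
      intro k
      have h1 := hfejer k
      have hε2 : (0:ℝ) < ε^2 := by positivity
      rw [le_div_iff₀ hε2]
      nlinarith [mul_nonneg (mul_nonneg (by positivity : (0:ℝ) ≤ 2*ε) hσ.le) (hDnonneg k)]
    refine squeeze_zero hQnonneg hbnd ?_
    have := hdiff.div_const (ε^2)
    simpa using this
  have hD0 : Tendsto D atTop (𝓝 0) := by
    have hbnd : ∀ k, D k ≤ (s k - s (k+1)) / (2*ε*σ) := by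
      intro k
      have h1 := hfejer k
      have hc : (0:ℝ) < 2*ε*σ := by positivity
      rw [le_div_iff₀ hc]
      nlinarith [mul_nonneg (sq_nonneg ε) (hQnonneg k)]
    refine squeeze_zero hDnonneg hbnd ?_
    have := hdiff.div_const (2*ε*σ)
    simpa using this
  have hqm0 : ∀ m, Tendsto (fun k => ‖q k m‖) atTop (𝓝 0) := by
    intro m
    have hbnd : ∀ k, ‖q k m‖ ≤ Real.sqrt (Qn k) := by
      intro k
      have h1 : ‖q k m‖^2 ≤ Qn k :=
        Finset.single_le_sum (f := fun m => ‖q k m‖^2) (fun m _ => sq_nonneg _)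
          (Finset.mem_univ m)
      calc ‖q k m‖ = Real.sqrt (‖q k m‖^2) := (Real.sqrt_sq (norm_nonneg _)).symm
      _ ≤ Real.sqrt (Qn k) := Real.sqrt_le_sqrt h1
    refine squeeze_zero (fun k => norm_nonneg _) hbnd ?_
    have hcont : Tendsto Real.sqrt (𝓝 0) (𝓝 0) := by
      simpa using (Real.continuous_sqrt.tendsto 0)
    exact hcont.comp hQn0
  -- boundedness of w
  have hwCb : ∀ k m, ‖w k m‖ ≤ Real.sqrt (s 0) + ∑ m', ‖wbar m'‖ := by
    intro k m
    have h1 : ‖w k m - wbar m‖^2 ≤ s k :=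
      Finset.single_le_sum (f := fun m => ‖w k m - wbar m‖^2) (fun m _ => sq_nonneg _)
        (Finset.mem_univ m)
    have h2 : s k ≤ s 0 := hanti (Nat.zero_le k)
    have h3 : ‖w k m - wbar m‖ ≤ Real.sqrt (s 0) := by
      calc ‖w k m - wbar m‖ = Real.sqrt (‖w k m - wbar m‖^2) :=
            (Real.sqrt_sq (norm_nonneg _)).symm
      _ ≤ Real.sqrt (s 0) := Real.sqrt_le_sqrt (by linarith)
    have h4 : ‖wbar m‖ ≤ ∑ m', ‖wbar m'‖ :=
      Finset.single_le_sum (f := fun m' => ‖wbar m'‖) (fun _ _ => norm_nonneg _)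
        (Finset.mem_univ m)
    have h5 : w k m = (w k m - wbar m) + wbar m := by abel
    calc ‖w k m‖ = ‖(w k m - wbar m) + wbar m‖ := by rw [← h5]
    _ ≤ ‖w k m - wbar m‖ + ‖wbar m‖ := norm_add_le _ _
    _ ≤ _ := by linarith
  -- boundedness of x
  have hxboundN : ∀ n : ℕ, ∃ C : ℝ, 0 ≤ C ∧
      ∀ k, ∀ i : Fin N, (i:ℕ) < n → ‖x (k+1) i - xb‖ ≤ C := by
    intro n
    induction n with
    | zero => exact ⟨0, le_refl 0, fun k i hi => absurd hi (Nat.not_lt_zero _)⟩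
    | succ n ih =>
      obtain ⟨C, hC0, hC⟩ := ih
      by_cases hnN : n < N
      · set i0 : Fin N := ⟨n, hnN⟩ with hi0
        set Cw : ℝ := Real.sqrt (s 0) + ∑ m', ‖wbar m'‖ with hCw
        set dd : ℝ := (lapE E' + sigmaE E' + pE E E') i0 i0 with hdd
        have hd1 : 1 ≤ dd := M_diag hN hbi i0
        set C1 : ℝ := (∑ m, |Z i0 m|) * Cw
          + (∑ h ∈ Finset.univ.erase i0, |(lapE E' + sigmaE E' + pE E E') i0 h|) * (C + ‖xb‖)
          + dd * ‖xb‖ + σ * ‖b i0‖ with hC1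
        refine ⟨max C C1, le_max_of_le_left hC0, fun k i hi => ?_⟩
        rcases Nat.lt_succ_iff_lt_or_eq.mp hi with hlt | heq
        · exact le_trans (hC k i hlt) (le_max_left _ _)
        · have hieq : i = i0 := Fin.ext heq
          rw [hieq]
          have hrow := congrFun (hiter.res k) i0
          simp only [Pi.add_apply, Pi.smul_apply] at hrow
          have hxsplit : matVecH (lapE E' + sigmaE E' + pE E E') (x (k+1)) i0
              = dd • x (k+1) i0 + ∑ h ∈ Finset.univ.erase i0,
                  (lapE E' + sigmaE E' + pE E E') i0 h • x (k+1) h := by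
            rw [hdd]
            exact (Finset.add_sum_erase _ _ (Finset.mem_univ i0)).symm
          set R : H := matVecH Z (w k) i0
            - (∑ h ∈ Finset.univ.erase i0, (lapE E' + sigmaE E' + pE E E') i0 h • x (k+1) h)
            - dd • xb - σ • b i0 with hR
          have hRrel : dd • (x (k+1) i0 - xb) + σ • (a (k+1) i0 - b i0) = R := by
            rw [hR, ← hrow, hxsplit]
            simp only [smul_sub]
            abel
          have hip : dd * ‖x (k+1) i0 - xb‖^2 ≤ ⟪R, x (k+1) i0 - xb⟫_ℝ := by
            rw [← hRrel]
            simp only [inner_add_left, real_inner_smul_left]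
            have hm : 0 ≤ ⟪a (k+1) i0 - b i0, x (k+1) i0 - xb⟫_ℝ :=
              hmono i0 _ _ _ _ (hiter.mem k i0) (hb i0)
            have hself : ⟪x (k+1) i0 - xb, x (k+1) i0 - xb⟫_ℝ = ‖x (k+1) i0 - xb‖^2 :=
              real_inner_self_eq_norm_sq _
            nlinarith [hσ]
          have hnorm : ‖x (k+1) i0 - xb‖ ≤ ‖R‖ := by
            have hcs : ⟪R, x (k+1) i0 - xb⟫_ℝ ≤ ‖R‖ * ‖x (k+1) i0 - xb‖ :=
              real_inner_le_norm _ _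
            rcases eq_or_lt_of_le (norm_nonneg (x (k+1) i0 - xb)) with h0 | hpos
            · rw [← h0]; exact norm_nonneg R
            · nlinarith [hip, hcs, hpos, hd1, sq_nonneg (‖x (k+1) i0 - xb‖)]
          have hRbound : ‖R‖ ≤ C1 := by
            have t1 : ‖matVecH Z (w k) i0‖ ≤ (∑ m, |Z i0 m|) * Cw := by
              calc ‖matVecH Z (w k) i0‖ ≤ ∑ m, ‖Z i0 m • w k m‖ := norm_sum_le _ _
              _ = ∑ m, |Z i0 m| * ‖w k m‖ := by
                  refine Finset.sum_congr rfl fun m _ => ?_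
                  rw [norm_smul, Real.norm_eq_abs]
              _ ≤ ∑ m, |Z i0 m| * Cw := Finset.sum_le_sum fun m _ =>
                  mul_le_mul_of_nonneg_left (hwCb k m) (abs_nonneg _)
              _ = (∑ m, |Z i0 m|) * Cw := by rw [Finset.sum_mul]
            have t2 : ‖∑ h ∈ Finset.univ.erase i0,
                (lapE E' + sigmaE E' + pE E E') i0 h • x (k+1) h‖
                ≤ (∑ h ∈ Finset.univ.erase i0, |(lapE E' + sigmaE E' + pE E E') i0 h|)
                  * (C + ‖xb‖) := by
              calc ‖∑ h ∈ Finset.univ.erase i0,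
                  (lapE E' + sigmaE E' + pE E E') i0 h • x (k+1) h‖
                  ≤ ∑ h ∈ Finset.univ.erase i0,
                    ‖(lapE E' + sigmaE E' + pE E E') i0 h • x (k+1) h‖ := norm_sum_le _ _
              _ ≤ ∑ h ∈ Finset.univ.erase i0,
                    |(lapE E' + sigmaE E' + pE E E') i0 h| * (C + ‖xb‖) := by
                  refine Finset.sum_le_sum fun h hh => ?_
                  rw [norm_smul, Real.norm_eq_abs]
                  rcases lt_trichotomy h i0 with hlt' | heq' | hgt'
                  · refine mul_le_mul_of_nonneg_left ?_ (abs_nonneg _)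
                    have hxh : ‖x (k+1) h‖ ≤ C + ‖xb‖ := by
                      have h6 : x (k+1) h = (x (k+1) h - xb) + xb := by abel
                      calc ‖x (k+1) h‖ = ‖(x (k+1) h - xb) + xb‖ := by rw [← h6]
                      _ ≤ ‖x (k+1) h - xb‖ + ‖xb‖ := norm_add_le _ _
                      _ ≤ C + ‖xb‖ := by
                          have := hC k h (by exact_mod_cast hlt')
                          linarith
                    exact hxh
                  · exact absurd heq' (Finset.ne_of_mem_erase hh)
                  · rw [M_upper hbi hgt']
                    simp [mul_nonneg, abs_nonneg]
              _ = _ := by rw [Finset.sum_mul]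
            have t3 : ‖dd • xb‖ = dd * ‖xb‖ := by
              rw [norm_smul, Real.norm_eq_abs, abs_of_nonneg (by linarith)]
            have t4 : ‖σ • b i0‖ = σ * ‖b i0‖ := by
              rw [norm_smul, Real.norm_eq_abs, abs_of_pos hσ]
            have htri : ‖R‖ ≤ ‖matVecH Z (w k) i0‖
                + ‖∑ h ∈ Finset.univ.erase i0,
                    (lapE E' + sigmaE E' + pE E E') i0 h • x (k+1) h‖
                + ‖dd • xb‖ + ‖σ • b i0‖ := by
              rw [hR]
              calc ‖matVecH Z (w k) i0
                  - (∑ h ∈ Finset.univ.erase i0,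
                      (lapE E' + sigmaE E' + pE E E') i0 h • x (k+1) h)
                  - dd • xb - σ • b i0‖
                  ≤ ‖matVecH Z (w k) i0
                    - (∑ h ∈ Finset.univ.erase i0,
                        (lapE E' + sigmaE E' + pE E E') i0 h • x (k+1) h)
                    - dd • xb‖ + ‖σ • b i0‖ := norm_sub_le _ _
              _ ≤ ‖matVecH Z (w k) i0
                    - (∑ h ∈ Finset.univ.erase i0,
                        (lapE E' + sigmaE E' + pE E E') i0 h • x (k+1) h)‖
                  + ‖dd • xb‖ + ‖σ • b i0‖ := by
                  have := norm_sub_le (matVecH Z (w k) i0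
                    - (∑ h ∈ Finset.univ.erase i0,
                        (lapE E' + sigmaE E' + pE E E') i0 h • x (k+1) h)) (dd • xb)
                  linarith
              _ ≤ _ := by
                  have := norm_sub_le (matVecH Z (w k) i0)
                    (∑ h ∈ Finset.univ.erase i0,
                      (lapE E' + sigmaE E' + pE E E') i0 h • x (k+1) h)
                  linarith
            rw [hC1]
            rw [t3, t4] at htri
            linarith
          exact le_trans (le_trans hnorm hRbound) (le_max_right _ _)
      · refine ⟨C, hC0, fun k i hi => hC k i ?_⟩
        have := i.isLt
        omega
  obtain ⟨Cx, hCx0, hCx⟩ := hxboundN N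
  have hxbd : ∀ k (i : Fin N), ‖x (k+1) i - xb‖ ≤ Cx := fun k i => hCx k i i.isLt
  -- uniform monotonicity on the bounded set S
  set S : Set H := {xb} ∪ {z | ∃ k, x (k+1) j = z} with hSdef
  have hSdom : S ⊆ {z : H | (A j z).Nonempty} := by
    rintro z (rfl | ⟨k, rfl⟩)
    · exact ⟨b j, hb j⟩
    · exact ⟨a (k+1) j, hiter.mem k j⟩
  have hSbdd : Bornology.IsBounded S := by
    rw [isBounded_iff_forall_norm_le]
    refine ⟨Cx + ‖xb‖, ?_⟩
    rintro z (rfl | ⟨k, rfl⟩)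
    · linarith [hCx0]
    · have h6 : x (k+1) j = (x (k+1) j - xb) + xb := by abel
      calc ‖x (k+1) j‖ = ‖(x (k+1) j - xb) + xb‖ := by rw [← h6]
      _ ≤ ‖x (k+1) j - xb‖ + ‖xb‖ := norm_add_le _ _
      _ ≤ Cx + ‖xb‖ := by linarith [hxbd k j]
  obtain ⟨φ, hφmono, hφpos, hφzero, hφineq⟩ := hunif S hSdom hSbdd
  -- x_j converges strongly
  have htj : ∀ k, 0 ≤ ⟪x (k+1) j - xb, a (k+1) j - b j⟫_ℝ := fun k => by
    rw [real_inner_comm]; exact hmono j _ _ _ _ (hiter.mem k j) (hb j)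
  have htjD : ∀ k, ⟪x (k+1) j - xb, a (k+1) j - b j⟫_ℝ ≤ D k := by
    intro k
    exact Finset.single_le_sum (f := fun i => ⟪x (k+1) i - xb, a (k+1) i - b i⟫_ℝ)
      (fun i _ => by
        rw [real_inner_comm]
        exact hmono i _ _ _ _ (hiter.mem k i) (hb i))
      (Finset.mem_univ j)
  have htj0 : Tendsto (fun k => ⟪x (k+1) j - xb, a (k+1) j - b j⟫_ℝ) atTop (𝓝 0) :=
    squeeze_zero htj htjD hD0
  have hxjnorm : Tendsto (fun k => ‖x (k+1) j - xb‖) atTop (𝓝 0) := by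
    refine Metric.tendsto_atTop.mpr fun δ hδ => ?_
    have hδ' : (0:ℝ) ≤ δ := hδ.le
    have hφδpos : (0:EReal) < φ δ := by
      rcases lt_or_eq_of_le (hφpos δ hδ') with h | h
      · exact h
      · exact absurd ((hφzero δ hδ').mp h.symm) hδ.ne'
    obtain ⟨r, hr1, hr2⟩ := EReal.lt_iff_exists_real_btwn.mp hφδpos
    have hr0 : (0:ℝ) < r := by exact_mod_cast hr1
    obtain ⟨K0, hK0⟩ := Metric.tendsto_atTop.mp htj0 r hr0
    refine ⟨K0, fun k hk => ?_⟩
    have hdist := hK0 k hk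
    have htk : ⟪x (k+1) j - xb, a (k+1) j - b j⟫_ℝ < r :=
      (abs_lt.mp (by simpa [Real.dist_eq] using hdist)).2
    have hx1 : x (k+1) j ∈ S := Or.inr ⟨k, rfl⟩
    have hx2 : xb ∈ S := Or.inl rfl
    have hφle := hφineq (x (k+1) j) xb (a (k+1) j) (b j) hx1 hx2 (hiter.mem k j) (hb j)
    have hinner_eq : ⟪a (k+1) j - b j, x (k+1) j - xb⟫_ℝ
        = ⟪x (k+1) j - xb, a (k+1) j - b j⟫_ℝ := real_inner_comm _ _
    rw [hinner_eq] at hφle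
    rw [Real.dist_eq, sub_zero, abs_of_nonneg (norm_nonneg _)]
    by_contra hcon
    push_neg at hcon
    have c1 : φ δ ≤ φ ‖x (k+1) j - xb‖ := hφmono δ _ hδ' hcon
    have c2 : ((⟪x (k+1) j - xb, a (k+1) j - b j⟫_ℝ : ℝ) : EReal) < (r:EReal) := by
      exact_mod_cast htk
    exact absurd (lt_of_le_of_lt (le_trans c1 hφle) (lt_trans c2 hr2)) (lt_irrefl _)
  have hxjlim : Tendsto (fun k => x (k+1) j) atTop (𝓝 xb) := by
    rw [tendsto_iff_norm_sub_tendsto_zero]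
    exact hxjnorm
  -- consensus
  have hcons : ∀ i : Fin N, Tendsto (fun k => x (k+1) i - x (k+1) j) atTop (𝓝 0) := by
    intro i
    rcases eq_or_ne i j with rfl | hij
    · have heq : (fun k => x (k+1) i - x (k+1) i) = fun _ => (0:H) := by
        funext k; simp
      rw [heq]
      exact tendsto_const_nhds
    · set vv : Fin N → ℝ := (Pi.single i (1:ℝ) : Fin N → ℝ) - Pi.single j 1 with hvv
      have hsingle_sum : ∑ hh, vv hh = 0 := by
        simp [hvv, Pi.sub_apply, Finset.sum_sub_distrib, Pi.single_apply]
      obtain ⟨y1, hy1⟩ := exists_lap_solve (H := ℝ) hN E' Z hZ vv hsingle_sum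
      set c : Fin (N-1) → ℝ := matVecH Z.transpose y1 with hcdef
      have hZc : matVecH Z c = vv := by
        rw [hcdef, ← matVecH_mul, hZ.1]
        exact hy1
      have hrep : ∀ u : Fin N → H, u i - u j = ∑ m, c m • matVecH Z.transpose u m := by
        intro u
        have h1 : ∑ m, c m • matVecH Z.transpose u m
            = ∑ m, ∑ hh, (c m * Z hh m) • u hh := by
          refine Finset.sum_congr rfl fun m _ => ?_
          simp [matVecH, Finset.smul_sum, smul_smul, Matrix.transpose_apply]
        have h2 : ∀ hh, (∑ m, (c m * Z hh m) • u hh) = ((matVecH Z c) hh) • u hh := by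
          intro hh
          rw [← Finset.sum_smul]
          congr 1
          simp [matVecH, smul_eq_mul, mul_comm]
        rw [h1, Finset.sum_comm, Finset.sum_congr rfl fun hh _ => h2 hh, hZc, hvv]
        simp [Pi.sub_apply, sub_smul, Finset.sum_sub_distrib, Pi.single_apply, ite_smul]
      have hbound : ∀ k, ‖x (k+1) i - x (k+1) j‖ ≤ ∑ m, |c m| * ‖q k m‖ := by
        intro k
        rw [hrep (x (k+1))]
        calc ‖∑ m, c m • matVecH Z.transpose (x (k+1)) m‖
            ≤ ∑ m, ‖c m • matVecH Z.transpose (x (k+1)) m‖ := norm_sum_le _ _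
        _ = ∑ m, |c m| * ‖q k m‖ := by
            refine Finset.sum_congr rfl fun m _ => ?_
            rw [norm_smul, Real.norm_eq_abs]
      have hsum0 : Tendsto (fun k => ∑ m, |c m| * ‖q k m‖) atTop (𝓝 0) := by
        have htt : Tendsto (fun k => ∑ m, |c m| * ‖q k m‖) atTop
            (𝓝 (∑ m : Fin (N-1), (0:ℝ))) := by
          refine tendsto_finset_sum _ fun m _ => ?_
          simpa using (hqm0 m).const_mul |c m|
        simpa using htt
      exact tendsto_zero_iff_norm_tendsto_zero.mpr
        (squeeze_zero (fun k => norm_nonneg _) hbound hsum0)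
  refine ⟨xb, ⟨b, hb, hbsum⟩, fun i => ?_⟩
  have h1 : Tendsto (fun k => x (k+1) i) atTop (𝓝 xb) := by
    have := (hcons i).add hxjlim
    simpa using this
  exact (tendsto_add_atTop_iff_nat 1).mp h1
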